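/- arXiv:2103.11034 — 5 statements merged into one kernel-verified Lean document; each statement's English description precedes it below -/
import Mathlib

section
/- Let u(ξ,t) solve u_t = D (L0^2/L^2) u_ξξ + ((A' L0 + ξ L')/L) u_ξ + f0 u on 0 < ξ < L0, and define w(ξ,t) = u(ξ,t) (L(t)/L0)^{1/2} exp(−f0 t + ∫_0^t A'(ζ)^2/(4D) dζ + ξ^2 L'(t) L(t)/(4 D L0^2) + ξ A'(t) L(t)/(2 D L0)). Then w satisfies w_t = D (L0^2/L(t)^2) w_ξξ + (ξ^2 L''(t) L(t)/(4 D L0^2) + ξ A''(t) L(t)/(2 D L0)) w on 0 < ξ < L0. -/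
open Real Set intervalIntegral

lemma aux1 (φ : ℝ → ℝ) (hφ : Differentiable ℝ φ) (P c a b m a' b' m' : ℝ) :
    deriv (fun z => φ z * P * Real.exp (c + z ^ 2 * a * b / m + z * a' * b' / m'))
      = fun z => (deriv φ z + φ z * (2 * z * a * b / m + a' * b' / m')) *
        (P * Real.exp (c + z ^ 2 * a * b / m + z * a' * b' / m')) := by
  funext z
  have harg : HasDerivAt (fun z' => c + z' ^ 2 * a * b / m + z' * a' * b' / m')
      (2 * z * a * b / m + a' * b' / m') z := by
    have h1 : HasDerivAt (fun z' : ℝ => z' ^ 2 * a * b / m) (2 * z * a * b / m) z := by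
      simpa using (((hasDerivAt_pow 2 z).mul_const a).mul_const b).div_const m
    have h2 : HasDerivAt (fun z' : ℝ => z' * a' * b' / m') (a' * b' / m') z := by
      simpa using (((hasDerivAt_id z).mul_const a').mul_const b').div_const m'
    exact (h1.const_add c).add h2
  have := (((hφ z).hasDerivAt.mul_const P).mul harg.exp).deriv
  exact this.trans (by ring)

lemma aux2 (φ : ℝ → ℝ) (hφ : ContDiff ℝ 2 φ) (P c a b m a' b' m' ξ : ℝ) :
    deriv (deriv (fun z => φ z * P * Real.exp (c + z ^ 2 * a * b / m + z * a' * b' / m'))) ξ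
      = (deriv (deriv φ) ξ + 2 * deriv φ ξ * (2 * ξ * a * b / m + a' * b' / m')
          + φ ξ * ((2 * ξ * a * b / m + a' * b' / m') ^ 2 + 2 * a * b / m)) *
        (P * Real.exp (c + ξ ^ 2 * a * b / m + ξ * a' * b' / m')) := by
  have hφd : Differentiable ℝ φ := hφ.differentiable two_ne_zero
  have hφ2 : ContDiff ℝ (1 + 1) φ := by exact_mod_cast hφ
  have hφ'd : Differentiable ℝ (deriv φ) :=
    ((contDiff_succ_iff_deriv.mp hφ2).2.2).differentiable one_ne_zero
  rw [aux1 φ hφd P c a b m a' b' m']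
  have harg : HasDerivAt (fun z' => c + z' ^ 2 * a * b / m + z' * a' * b' / m')
      (2 * ξ * a * b / m + a' * b' / m') ξ := by
    have h1 : HasDerivAt (fun z' : ℝ => z' ^ 2 * a * b / m) (2 * ξ * a * b / m) ξ := by
      simpa using (((hasDerivAt_pow 2 ξ).mul_const a).mul_const b).div_const m
    have h2 : HasDerivAt (fun z' : ℝ => z' * a' * b' / m') (a' * b' / m') ξ := by
      simpa using (((hasDerivAt_id ξ).mul_const a').mul_const b').div_const m'
    exact (h1.const_add c).add h2
  have hθ : HasDerivAt (fun z : ℝ => 2 * z * a * b / m + a' * b' / m') (2 * a * b / m) ξ := by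
    simpa using ((((((hasDerivAt_id ξ).const_mul 2).mul_const a).mul_const b).div_const m).add_const
      (a' * b' / m'))
  have hfirst : HasDerivAt (fun z => deriv φ z + φ z * (2 * z * a * b / m + a' * b' / m'))
      (deriv (deriv φ) ξ + (deriv φ ξ * (2 * ξ * a * b / m + a' * b' / m')
        + φ ξ * (2 * a * b / m))) ξ :=
    (hφ'd ξ).hasDerivAt.add ((hφd ξ).hasDerivAt.mul hθ)
  have := (hfirst.mul (harg.exp.const_mul P)).deriv
  exact this.trans (by ring)

/-- Removing the first-order terms: if `u` solves the transformed equation on `(0, L0)` and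
`w(ξ,t) = u(ξ,t) (L/L0)^{1/2} exp(−f0 t + ∫₀ᵗ A'²/(4D) + ξ² L' L/(4 D L0²) + ξ A' L/(2 D L0))`,
then `w_t = D (L0²/L²) w_ξξ + (ξ² L'' L/(4 D L0²) + ξ A'' L/(2 D L0)) w` on `(0, L0)`. -/
theorem stmt_3 (D f0 : ℝ) (hD : 0 < D) (hf0 : 0 < f0)
    (A L : ℝ → ℝ) (hA : ContDiff ℝ 2 A) (hL : ContDiff ℝ 2 L)
    (hLpos : ∀ t, 0 < L t) (L0 : ℝ) (hL0 : L0 = L 0)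
    (u : ℝ → ℝ → ℝ)
    (hu : ContDiff ℝ 2 (fun p : ℝ × ℝ => u p.1 p.2))
    (hpde : ∀ t ≥ (0:ℝ), ∀ ξ ∈ Ioo (0:ℝ) L0,
      deriv (fun τ => u ξ τ) t
        = D * (L0 ^ 2 / (L t) ^ 2) * deriv (deriv (fun z => u z t)) ξ
          + ((deriv A t * L0 + ξ * deriv L t) / L t) * deriv (fun z => u z t) ξ
          + f0 * u ξ t)
    (w : ℝ → ℝ → ℝ)
    (hw : ∀ ξ t, w ξ t = u ξ t * (L t / L0) ^ ((1:ℝ)/2) *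
      Real.exp (-f0 * t + (∫ ζ in (0:ℝ)..t, (deriv A ζ) ^ 2 / (4 * D))
        + ξ ^ 2 * deriv L t * L t / (4 * D * L0 ^ 2)
        + ξ * deriv A t * L t / (2 * D * L0))) :
    ∀ t ≥ (0:ℝ), ∀ ξ ∈ Ioo (0:ℝ) L0,
      deriv (fun τ => w ξ τ) t
        = D * (L0 ^ 2 / (L t) ^ 2) * deriv (deriv (fun z => w z t)) ξ
          + (ξ ^ 2 * deriv (deriv L) t * L t / (4 * D * L0 ^ 2)
             + ξ * deriv (deriv A) t * L t / (2 * D * L0)) * w ξ t := by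
  intro t ht ξ hξ
  have hL0pos : 0 < L0 := hL0 ▸ hLpos 0
  have hLt := hLpos t
  have hLne : L t ≠ 0 := ne_of_gt hLt
  have hL0ne : L0 ≠ 0 := ne_of_gt hL0pos
  have hDne : D ≠ 0 := ne_of_gt hD
  have hratio : (0:ℝ) < L t / L0 := div_pos hLt hL0pos
  -- C^2 data
  have hA2 : ContDiff ℝ (1 + 1) A := by exact_mod_cast hA
  have hL2 : ContDiff ℝ (1 + 1) L := by exact_mod_cast hL
  have hA'C1 : ContDiff ℝ 1 (deriv A) := (contDiff_succ_iff_deriv.mp hA2).2.2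
  have hL'C1 : ContDiff ℝ 1 (deriv L) := (contDiff_succ_iff_deriv.mp hL2).2.2
  have hLd : HasDerivAt L (deriv L t) t := ((hL.differentiable two_ne_zero) t).hasDerivAt
  have hL'd : HasDerivAt (deriv L) (deriv (deriv L) t) t :=
    ((hL'C1.differentiable one_ne_zero) t).hasDerivAt
  have hA'd : HasDerivAt (deriv A) (deriv (deriv A) t) t :=
    ((hA'C1.differentiable one_ne_zero) t).hasDerivAt
  have huz : ContDiff ℝ 2 (fun z => u z t) :=
    hu.comp (contDiff_id.prodMk contDiff_const)
  have hut : HasDerivAt (fun τ => u ξ τ) (deriv (fun τ => u ξ τ) t) t := by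
    have h2 : ContDiff ℝ 2 (fun τ => u ξ τ) := hu.comp (contDiff_const.prodMk contDiff_id)
    exact ((h2.differentiable two_ne_zero) t).hasDerivAt
  -- derivative of P(τ) = (L τ / L0)^(1/2)
  have hPder : HasDerivAt (fun τ => (L τ / L0) ^ ((1:ℝ)/2))
      ((L t / L0) ^ ((1:ℝ)/2) * deriv L t / (2 * L t)) t := by
    have h1 : HasDerivAt (fun τ => L τ / L0) (deriv L t / L0) t := hLd.div_const L0
    have h2 := h1.rpow_const (p := (1:ℝ)/2) (Or.inl (ne_of_gt hratio))
    convert h2 using 1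
    rw [Real.rpow_sub hratio, Real.rpow_one]
    field_simp
  -- derivative of the integral term
  have hI : HasDerivAt (fun τ => ∫ ζ in (0:ℝ)..τ, (deriv A ζ) ^ 2 / (4 * D))
      ((deriv A t) ^ 2 / (4 * D)) t := by
    have hc : Continuous (fun ζ => (deriv A ζ) ^ 2 / (4 * D)) :=
      ((hA'C1.continuous).pow 2).div_const _
    exact (hc.integral_hasStrictDerivAt 0 t).hasDerivAt
  -- time derivative of the exponent
  have harg_t : HasDerivAt (fun τ => -f0 * τ + (∫ ζ in (0:ℝ)..τ, (deriv A ζ) ^ 2 / (4 * D))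
      + ξ ^ 2 * deriv L τ * L τ / (4 * D * L0 ^ 2)
      + ξ * deriv A τ * L τ / (2 * D * L0))
      (-f0 + (deriv A t) ^ 2 / (4 * D)
        + (ξ ^ 2 * deriv (deriv L) t * L t + ξ ^ 2 * deriv L t * deriv L t) / (4 * D * L0 ^ 2)
        + (ξ * deriv (deriv A) t * L t + ξ * deriv A t * deriv L t) / (2 * D * L0)) t := by
    have h1 : HasDerivAt (fun τ : ℝ => -f0 * τ) (-f0) t := by
      simpa using (hasDerivAt_id t).const_mul (-f0)
    have h3 : HasDerivAt (fun τ => ξ ^ 2 * deriv L τ * L τ / (4 * D * L0 ^ 2))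
        ((ξ ^ 2 * deriv (deriv L) t * L t + ξ ^ 2 * deriv L t * deriv L t) / (4 * D * L0 ^ 2))
        t := ((hL'd.const_mul (ξ ^ 2)).mul hLd).div_const _
    have h4 : HasDerivAt (fun τ => ξ * deriv A τ * L τ / (2 * D * L0))
        ((ξ * deriv (deriv A) t * L t + ξ * deriv A t * deriv L t) / (2 * D * L0)) t :=
      ((hA'd.const_mul ξ).mul hLd).div_const _
    exact ((h1.add hI).add h3).add h4
  have hTime := ((hut.mul hPder).mul harg_t.exp).deriv
  simp only [Pi.mul_def] at hTime
  simp only [hw]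
  rw [hTime, aux2 (fun z => u z t) huz ((L t / L0) ^ ((1:ℝ)/2))
    (-f0 * t + (∫ ζ in (0:ℝ)..t, (deriv A ζ) ^ 2 / (4 * D)))
    (deriv L t) (L t) (4 * D * L0 ^ 2) (deriv A t) (L t) (2 * D * L0) ξ,
    hpde t ht ξ hξ]
  set P : ℝ := (L t / L0) ^ ((1:ℝ)/2) with hPdef
  set E : ℝ := Real.exp (-f0 * t + (∫ ζ in (0:ℝ)..t, (deriv A ζ) ^ 2 / (4 * D))
      + ξ ^ 2 * deriv L t * L t / (4 * D * L0 ^ 2)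
      + ξ * deriv A t * L t / (2 * D * L0)) with hEdef
  set U : ℝ := u ξ t
  set Ux : ℝ := deriv (fun z => u z t) ξ
  set Uxx : ℝ := deriv (deriv fun z => u z t) ξ
  field_simp
  ring
end

section
/- Let g be a positive C^2 function on (0, L0), continuous on [0, L0] with g(0) = g(L0) = 0, satisfying σ g(ξ) = D g''(ξ) + (−ρ^2 ξ^2/(4 D L0^4) + γ1 ξ/(2 D L0^3)) g(ξ) on (0, L0), with ρ ≠ 0. Then σ < −|ρ|/(2 L0^2) + γ1^2/(4 D ρ^2 L0^2). -/
open Real Set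

/-- Eigenvalue bound: if `g > 0` on `(0,L0)` with Dirichlet conditions solves
`σ g = D g'' + (−ρ² ξ²/(4 D L0⁴) + γ1 ξ/(2 D L0³)) g` with `ρ ≠ 0`, then
`σ < −|ρ|/(2 L0²) + γ1²/(4 D ρ² L0²)`. -/
theorem stmt_4 (D L0 ρ γ1 σ : ℝ) (hD : 0 < D) (hL0 : 0 < L0) (hρ : ρ ≠ 0)
    (g : ℝ → ℝ)
    (hgC2 : ContDiffOn ℝ 2 g (Ioo 0 L0))
    (hgcont : ContinuousOn g (Icc 0 L0))
    (hgpos : ∀ ξ ∈ Ioo (0:ℝ) L0, 0 < g ξ)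
    (hg0 : g 0 = 0) (hgL0 : g L0 = 0)
    (hode : ∀ ξ ∈ Ioo (0:ℝ) L0,
      σ * g ξ = D * deriv (deriv g) ξ
        + (-ρ ^ 2 * ξ ^ 2 / (4 * D * L0 ^ 4) + γ1 * ξ / (2 * D * L0 ^ 3)) * g ξ) :
    σ < -|ρ| / (2 * L0 ^ 2) + γ1 ^ 2 / (4 * D * ρ ^ 2 * L0 ^ 2) := by
  by_contra hcon
  push_neg at hcon
  set E : ℝ := -|ρ| / (2 * L0 ^ 2) + γ1 ^ 2 / (4 * D * ρ ^ 2 * L0 ^ 2) with hE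
  have habs : (0:ℝ) < |ρ| := abs_pos.mpr hρ
  set a : ℝ := |ρ| / (2 * D * L0 ^ 2) with ha
  have hapos : 0 < a := by positivity
  set c : ℝ := γ1 * L0 / ρ ^ 2 with hc
  set φ : ℝ → ℝ := fun ξ => Real.exp (-(a / 2) * (ξ - c) ^ 2) with hφ
  have hφpos : ∀ ξ, 0 < φ ξ := fun ξ => Real.exp_pos _
  set φ1 : ℝ → ℝ := fun ξ => (-a * (ξ - c)) * φ ξ with hφ1
  set φ2 : ℝ → ℝ := fun ξ => (a ^ 2 * (ξ - c) ^ 2 - a) * φ ξ with hφ2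
  have hdφ : ∀ ξ, HasDerivAt φ (φ1 ξ) ξ := by
    intro ξ
    have h1 : HasDerivAt (fun x : ℝ => -(a / 2) * (x - c) ^ 2)
        (-(a / 2) * (2 * (ξ - c))) ξ := by
      have h2 := (((hasDerivAt_id ξ).sub_const c).pow 2).const_mul (-(a / 2))
      simpa using h2
    have h3 := h1.exp
    convert h3 using 1
    simp only [hφ1, hφ]
    ring
  have hdφ1 : ∀ ξ, HasDerivAt φ1 (φ2 ξ) ξ := by
    intro ξ
    have h1 : HasDerivAt (fun x : ℝ => -a * (x - c)) (-a) ξ := by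
      simpa using ((hasDerivAt_id ξ).sub_const c).const_mul (-a)
    have h3 : HasDerivAt (fun y => -a * (y - c) * φ y) (-a * φ ξ + -a * (ξ - c) * φ1 ξ) ξ :=
      h1.mul (hdφ ξ)
    convert h3 using 1
    simp only [hφ2, hφ1]
    ring
  have hkey : ∀ ξ : ℝ,
      D * φ2 ξ + (-ρ ^ 2 * ξ ^ 2 / (4 * D * L0 ^ 4) + γ1 * ξ / (2 * D * L0 ^ 3)) * φ ξ
        = E * φ ξ := by
    intro ξ
    have h2 : D * (a ^ 2 * (ξ - c) ^ 2 - a)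
        + (-ρ ^ 2 * ξ ^ 2 / (4 * D * L0 ^ 4) + γ1 * ξ / (2 * D * L0 ^ 3)) = E := by
      rw [hE, ha, hc, ← sq_abs ρ]
      field_simp
      ring
    calc D * φ2 ξ + (-ρ ^ 2 * ξ ^ 2 / (4 * D * L0 ^ 4) + γ1 * ξ / (2 * D * L0 ^ 3)) * φ ξ
        = (D * (a ^ 2 * (ξ - c) ^ 2 - a)
            + (-ρ ^ 2 * ξ ^ 2 / (4 * D * L0 ^ 4) + γ1 * ξ / (2 * D * L0 ^ 3))) * φ ξ := by
          simp only [hφ2]; ring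
      _ = E * φ ξ := by rw [h2]
  have hopen : IsOpen (Ioo (0:ℝ) L0) := isOpen_Ioo
  have hg1 : ∀ ξ ∈ Ioo (0:ℝ) L0, HasDerivAt g (deriv g ξ) ξ := by
    intro ξ hξ
    exact ((hgC2.contDiffAt (hopen.mem_nhds hξ)).differentiableAt (by norm_num)).hasDerivAt
  have hgderivC : ContDiffOn ℝ 1 (deriv g) (Ioo 0 L0) :=
    hgC2.deriv_of_isOpen hopen (by norm_num)
  have hg2 : ∀ ξ ∈ Ioo (0:ℝ) L0, HasDerivAt (deriv g) (deriv (deriv g) ξ) ξ := by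
    intro ξ hξ
    exact ((hgderivC.contDiffAt (hopen.mem_nhds hξ)).differentiableAt (by norm_num)).hasDerivAt
  set W : ℝ → ℝ := fun ξ => deriv g ξ * φ ξ - g ξ * φ1 ξ with hW
  have hdW : ∀ ξ ∈ Ioo (0:ℝ) L0, HasDerivAt W ((σ - E) / D * (g ξ * φ ξ)) ξ := by
    intro ξ hξ
    have h1 := ((hg2 ξ hξ).mul (hdφ ξ)).sub ((hg1 ξ hξ).mul (hdφ1 ξ))
    have heq : deriv (deriv g) ξ * φ ξ + deriv g ξ * φ1 ξ
        - (deriv g ξ * φ1 ξ + g ξ * φ2 ξ) = (σ - E) / D * (g ξ * φ ξ) := by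
      rw [div_mul_eq_mul_div, eq_div_iff hD.ne']
      linear_combination (-(φ ξ)) * hode ξ hξ + (-(g ξ)) * hkey ξ
    exact heq ▸ h1
  have hdWnonneg : ∀ ξ ∈ Ioo (0:ℝ) L0, 0 ≤ (σ - E) / D * (g ξ * φ ξ) := by
    intro ξ hξ
    exact mul_nonneg (div_nonneg (by linarith) hD.le)
      (mul_nonneg (hgpos ξ hξ).le (hφpos ξ).le)
  set u : ℝ → ℝ := fun ξ => g ξ / φ ξ with hu
  have hdu : ∀ ξ ∈ Ioo (0:ℝ) L0, HasDerivAt u (W ξ / (φ ξ) ^ 2) ξ := by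
    intro ξ hξ
    exact (hg1 ξ hξ).div (hdφ ξ) (hφpos ξ).ne'
  have hφcont : Continuous φ := by
    apply Real.continuous_exp.comp
    exact continuous_const.mul ((continuous_id.sub continuous_const).pow 2)
  have hucont : ContinuousOn u (Icc 0 L0) :=
    hgcont.div hφcont.continuousOn (fun ξ _ => (hφpos ξ).ne')
  by_cases hcase : ∃ t0 ∈ Ioo (0:ℝ) L0, 0 < W t0
  · -- W is eventually positive, so u increases up to L0, contradicting u L0 = 0
    obtain ⟨t0, ht0, hWt0⟩ := hcase
    set t1 : ℝ := (t0 + L0) / 2 with ht1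
    have ht0t1 : t0 < t1 := by simp only [ht1]; linarith [ht0.2]
    have ht1L0 : t1 < L0 := by simp only [ht1]; linarith [ht0.2]
    have ht1mem : t1 ∈ Ioo (0:ℝ) L0 := ⟨lt_trans ht0.1 ht0t1, ht1L0⟩
    have hWmono : ∀ t ∈ Ico t1 L0, W t0 ≤ W t := by
      intro t ht
      have hsub : Icc t0 t ⊆ Ioo 0 L0 := fun x hx =>
        ⟨lt_of_lt_of_le ht0.1 hx.1, lt_of_le_of_lt hx.2 ht.2⟩
      have hmono : MonotoneOn W (Icc t0 t) := by
        apply monotoneOn_of_deriv_nonneg (convex_Icc t0 t)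
        · exact fun x hx => (hdW x (hsub hx)).continuousAt.continuousWithinAt
        · intro x hx
          rw [interior_Icc] at hx
          exact ((hdW x (hsub (Ioo_subset_Icc_self hx))).differentiableAt).differentiableWithinAt
        · intro x hx
          rw [interior_Icc] at hx
          rw [(hdW x (hsub (Ioo_subset_Icc_self hx))).deriv]
          exact hdWnonneg x (hsub (Ioo_subset_Icc_self hx))
      have ht0t : t0 ≤ t := le_trans ht0t1.le ht.1
      exact hmono ⟨le_refl t0, ht0t⟩ ⟨ht0t, le_refl t⟩ ht0t
    have humono : ∀ t ∈ Ico t1 L0, u t1 ≤ u t := by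
      intro t ht
      rcases eq_or_lt_of_le ht.1 with heq | hlt
      · rw [← heq]
      · have hsub : Icc t1 t ⊆ Ioo 0 L0 := fun x hx =>
          ⟨lt_of_lt_of_le ht1mem.1 hx.1, lt_of_le_of_lt hx.2 ht.2⟩
        have hmono : MonotoneOn u (Icc t1 t) := by
          apply monotoneOn_of_deriv_nonneg (convex_Icc t1 t)
          · exact fun x hx => (hdu x (hsub hx)).continuousAt.continuousWithinAt
          · intro x hx
            rw [interior_Icc] at hx
            exact ((hdu x (hsub (Ioo_subset_Icc_self hx))).differentiableAt).differentiableWithinAt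
          · intro x hx
            rw [interior_Icc] at hx
            rw [(hdu x (hsub (Ioo_subset_Icc_self hx))).deriv]
            have hWx : 0 < W x :=
              lt_of_lt_of_le hWt0 (hWmono x ⟨hx.1.le, lt_of_lt_of_le hx.2 ht.2.le⟩)
            positivity
        exact hmono ⟨le_refl t1, ht.1⟩ ⟨ht.1, le_refl t⟩ ht.1
    have hclos : L0 ∈ closure (Ioo (0:ℝ) L0) := by
      rw [closure_Ioo hL0.ne]
      exact ⟨hL0.le, le_refl _⟩
    have hne : (nhdsWithin L0 (Ioo (0:ℝ) L0)).NeBot :=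
      mem_closure_iff_nhdsWithin_neBot.mp hclos
    have htend : Filter.Tendsto u (nhdsWithin L0 (Ioo (0:ℝ) L0)) (nhds (u L0)) :=
      (hucont L0 (right_mem_Icc.mpr hL0.le)).mono_left
        (nhdsWithin_mono _ Ioo_subset_Icc_self)
    have hev : ∀ᶠ x in nhdsWithin L0 (Ioo (0:ℝ) L0), u t1 ≤ u x := by
      filter_upwards [nhdsWithin_le_nhds (Ioi_mem_nhds ht1L0), self_mem_nhdsWithin]
        with x hx1 hx2
      exact humono x ⟨le_of_lt hx1, hx2.2⟩
    have hle : u t1 ≤ u L0 := ge_of_tendsto htend hev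
    have huL0 : u L0 = 0 := by simp [hu, hgL0]
    have hut1 : 0 < u t1 := div_pos (hgpos t1 ht1mem) (hφpos t1)
    rw [huL0] at hle
    linarith
  · -- W ≤ 0 everywhere, so u decreases from 0, contradicting u > 0 inside
    push_neg at hcase
    set t1 : ℝ := L0 / 2 with ht1
    have ht1mem : t1 ∈ Ioo (0:ℝ) L0 := ⟨by positivity, by simp only [ht1]; linarith⟩
    have huanti : ∀ s ∈ Ioo (0:ℝ) t1, u t1 ≤ u s := by
      intro s hs
      have hsub : Icc s t1 ⊆ Ioo 0 L0 := fun x hx =>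
        ⟨lt_of_lt_of_le hs.1 hx.1, lt_of_le_of_lt hx.2 ht1mem.2⟩
      have hanti : AntitoneOn u (Icc s t1) := by
        apply antitoneOn_of_deriv_nonpos (convex_Icc s t1)
        · exact fun x hx => (hdu x (hsub hx)).continuousAt.continuousWithinAt
        · intro x hx
          rw [interior_Icc] at hx
          exact ((hdu x (hsub (Ioo_subset_Icc_self hx))).differentiableAt).differentiableWithinAt
        · intro x hx
          rw [interior_Icc] at hx
          rw [(hdu x (hsub (Ioo_subset_Icc_self hx))).deriv]
          have hWx : W x ≤ 0 := hcase x (hsub (Ioo_subset_Icc_self hx))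
          have : (0:ℝ) < (φ x) ^ 2 := by positivity
          exact div_nonpos_of_nonpos_of_nonneg hWx this.le
      exact hanti ⟨le_refl s, hs.2.le⟩ ⟨hs.2.le, le_refl t1⟩ hs.2.le
    have hclos : (0:ℝ) ∈ closure (Ioo (0:ℝ) L0) := by
      rw [closure_Ioo hL0.ne]
      exact ⟨le_refl _, hL0.le⟩
    have hne : (nhdsWithin (0:ℝ) (Ioo (0:ℝ) L0)).NeBot :=
      mem_closure_iff_nhdsWithin_neBot.mp hclos
    have htend : Filter.Tendsto u (nhdsWithin (0:ℝ) (Ioo (0:ℝ) L0)) (nhds (u 0)) :=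
      (hucont 0 (left_mem_Icc.mpr hL0.le)).mono_left
        (nhdsWithin_mono _ Ioo_subset_Icc_self)
    have hev : ∀ᶠ x in nhdsWithin (0:ℝ) (Ioo (0:ℝ) L0), u t1 ≤ u x := by
      filter_upwards [nhdsWithin_le_nhds (Iio_mem_nhds ht1mem.1), self_mem_nhdsWithin]
        with x hx1 hx2
      exact huanti x ⟨hx2.1, hx1⟩
    have hle : u t1 ≤ u 0 := ge_of_tendsto htend hev
    have hu0 : u 0 = 0 := by simp [hu, hg0]
    have hut1 : 0 < u t1 := div_pos (hgpos t1 ht1mem) (hφpos t1)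
    rw [hu0] at hle
    linarith
end

section
/- For L(t) = L0 fixed and A(t) = (γ1/(2 L0^3)) t^2 + c t + d, the function u_n(ξ,t) = exp(σ_n t) g_n(ξ) exp(f0 t − (1/(4D))(γ1^2 t^3/(3 L0^6) + c γ1 t^2/L0^3 + c^2 t) − (ξ/(2 D L0))(γ1 t / L0^2 + c L0)) solves u_t = D u_ξξ + ((A'(t) L0 + ξ·0)/L0) u_ξ + f0 u on (0, L0) with u_n(0,t) = u_n(L0,t) = 0, where g_n is a Dirichlet eigenfunction on (0, L0) satisfying σ_n g_n = D g_n'' + (γ1 ξ/(2 D L0^3)) g_n with g_n(0) = g_n(L0) = 0. -/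
open Real Set

/-- Exact separable solution for fixed length `L0` and `A(t) = γ1 t²/(2 L0³) + c t + d`. -/
theorem stmt_6 (D f0 L0 γ1 c d σn : ℝ) (hD : 0 < D) (hf0 : 0 < f0) (hL0 : 0 < L0)
    (gn : ℝ → ℝ) (hgn : ContDiff ℝ 2 gn)
    (hgn0 : gn 0 = 0) (hgnL0 : gn L0 = 0)
    (hSL : ∀ ξ ∈ Icc (0:ℝ) L0,
      σn * gn ξ = D * deriv (deriv gn) ξ + (γ1 * ξ / (2 * D * L0 ^ 3)) * gn ξ)
    (A : ℝ → ℝ) (hA : ∀ t, A t = γ1 / (2 * L0 ^ 3) * t ^ 2 + c * t + d)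
    (u : ℝ → ℝ → ℝ)
    (hu : ∀ ξ t, u ξ t = Real.exp (σn * t) * gn ξ *
      Real.exp (f0 * t
        - (1 / (4 * D)) * (γ1 ^ 2 * t ^ 3 / (3 * L0 ^ 6)
            + c * γ1 * t ^ 2 / L0 ^ 3 + c ^ 2 * t)
        - (ξ / (2 * D * L0)) * (γ1 * t / L0 ^ 2 + c * L0))) :
    (∀ t, ∀ ξ ∈ Ioo (0:ℝ) L0,
      deriv (fun τ => u ξ τ) t
        = D * deriv (deriv (fun z => u z t)) ξ
          + ((deriv A t * L0 + ξ * 0) / L0) * deriv (fun z => u z t) ξ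
          + f0 * u ξ t) ∧
    (∀ t, u 0 t = 0 ∧ u L0 t = 0) := by
  have hDne : D ≠ 0 := ne_of_gt hD
  have hLne : L0 ≠ 0 := ne_of_gt hL0
  have hdg : Differentiable ℝ gn := hgn.differentiable two_ne_zero
  have hdg' : Differentiable ℝ (deriv gn) := by
    have h2 : ContDiff ℝ ((1:ℕ∞)+1) gn := by norm_num; exact_mod_cast hgn
    exact ((contDiff_succ_iff_deriv.mp h2).2.2).differentiable (by norm_num)
  have hu' : u = fun ξ t => Real.exp (σn * t) * gn ξ *
      Real.exp (f0 * t
        - (1 / (4 * D)) * (γ1 ^ 2 * t ^ 3 / (3 * L0 ^ 6)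
            + c * γ1 * t ^ 2 / L0 ^ 3 + c ^ 2 * t)
        - (ξ / (2 * D * L0)) * (γ1 * t / L0 ^ 2 + c * L0)) :=
    funext fun ξ => funext fun t => hu ξ t
  subst hu'
  have hA' : A = fun t => γ1 / (2 * L0 ^ 3) * t ^ 2 + c * t + d := funext hA
  subst hA'
  refine ⟨?_, fun t => by simp [hgn0, hgnL0]⟩
  intro t ξ hξ
  -- derivative of A
  have hdA : deriv (fun t : ℝ => γ1 / (2 * L0 ^ 3) * t ^ 2 + c * t + d) t
      = γ1 / (2 * L0 ^ 3) * (2 * t) + c := by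
    have h1 : HasDerivAt (fun t : ℝ => γ1 / (2 * L0 ^ 3) * t ^ 2 + c * t + d)
        (γ1 / (2 * L0 ^ 3) * (2 * t) + c) t := by
      have := (((hasDerivAt_pow 2 t).const_mul (γ1 / (2 * L0 ^ 3))).add
        ((hasDerivAt_id' t).const_mul c)).add_const d
      refine this.congr_deriv ?_
      push_cast; ring
    exact h1.deriv
  -- time derivative
  have htd : HasDerivAt (fun τ => Real.exp (σn * τ) * gn ξ *
      Real.exp (f0 * τ
        - (1 / (4 * D)) * (γ1 ^ 2 * τ ^ 3 / (3 * L0 ^ 6)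
            + c * γ1 * τ ^ 2 / L0 ^ 3 + c ^ 2 * τ)
        - (ξ / (2 * D * L0)) * (γ1 * τ / L0 ^ 2 + c * L0)))
      ((σn * Real.exp (σn * t)) * gn ξ *
        Real.exp (f0 * t
          - (1 / (4 * D)) * (γ1 ^ 2 * t ^ 3 / (3 * L0 ^ 6)
              + c * γ1 * t ^ 2 / L0 ^ 3 + c ^ 2 * t)
          - (ξ / (2 * D * L0)) * (γ1 * t / L0 ^ 2 + c * L0))
       + (Real.exp (σn * t) * gn ξ) *
        ((f0 - (1 / (4 * D)) * (γ1 ^ 2 * (3 * t ^ 2) / (3 * L0 ^ 6)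
              + c * γ1 * (2 * t) / L0 ^ 3 + c ^ 2)
          - (ξ / (2 * D * L0)) * (γ1 / L0 ^ 2)) *
          Real.exp (f0 * t
            - (1 / (4 * D)) * (γ1 ^ 2 * t ^ 3 / (3 * L0 ^ 6)
                + c * γ1 * t ^ 2 / L0 ^ 3 + c ^ 2 * t)
            - (ξ / (2 * D * L0)) * (γ1 * t / L0 ^ 2 + c * L0)))) t := by
    have h1 : HasDerivAt (fun τ : ℝ => Real.exp (σn * τ)) (σn * Real.exp (σn * t)) t := by
      have := ((hasDerivAt_id' t).const_mul σn).exp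
      convert this using 1
      simp [mul_comm]
    have he : HasDerivAt (fun τ : ℝ => f0 * τ
        - (1 / (4 * D)) * (γ1 ^ 2 * τ ^ 3 / (3 * L0 ^ 6)
            + c * γ1 * τ ^ 2 / L0 ^ 3 + c ^ 2 * τ)
        - (ξ / (2 * D * L0)) * (γ1 * τ / L0 ^ 2 + c * L0))
        (f0 - (1 / (4 * D)) * (γ1 ^ 2 * (3 * t ^ 2) / (3 * L0 ^ 6)
            + c * γ1 * (2 * t) / L0 ^ 3 + c ^ 2)
          - (ξ / (2 * D * L0)) * (γ1 / L0 ^ 2)) t := by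
      have ha : HasDerivAt (fun τ : ℝ => f0 * τ) f0 t := by
        simpa using (hasDerivAt_id' t).const_mul f0
      have hb : HasDerivAt (fun τ : ℝ => γ1 ^ 2 * τ ^ 3 / (3 * L0 ^ 6)
          + c * γ1 * τ ^ 2 / L0 ^ 3 + c ^ 2 * τ)
          (γ1 ^ 2 * (3 * t ^ 2) / (3 * L0 ^ 6) + c * γ1 * (2 * t) / L0 ^ 3 + c ^ 2) t := by
        have h3 := (((hasDerivAt_pow 3 t).const_mul (γ1 ^ 2)).div_const (3 * L0 ^ 6))
        have h4 := (((hasDerivAt_pow 2 t).const_mul (c * γ1)).div_const (L0 ^ 3))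
        have h5 : HasDerivAt (fun τ : ℝ => c ^ 2 * τ) (c ^ 2) t := by
          simpa using (hasDerivAt_id' t).const_mul (c ^ 2)
        have := (h3.add h4).add h5
        refine this.congr_deriv ?_
        push_cast; ring
      have hc : HasDerivAt (fun τ : ℝ => (ξ / (2 * D * L0)) * (γ1 * τ / L0 ^ 2 + c * L0))
          ((ξ / (2 * D * L0)) * (γ1 / L0 ^ 2)) t := by
        have h6 : HasDerivAt (fun τ : ℝ => γ1 * τ / L0 ^ 2 + c * L0) (γ1 / L0 ^ 2) t := by
          have := (((hasDerivAt_id' t).const_mul γ1).div_const (L0 ^ 2)).add_const (c * L0)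
          refine this.congr_deriv ?_; ring
        exact h6.const_mul _
      exact (ha.sub (hb.const_mul _)).sub hc
    have := (h1.mul_const (gn ξ)).mul he.exp
    refine this.congr_deriv ?_; ring
  -- spatial derivatives: generic pointwise first derivative
  have hsd : ∀ z : ℝ, HasDerivAt (fun z => Real.exp (σn * t) * gn z *
      Real.exp (f0 * t
        - (1 / (4 * D)) * (γ1 ^ 2 * t ^ 3 / (3 * L0 ^ 6)
            + c * γ1 * t ^ 2 / L0 ^ 3 + c ^ 2 * t)
        - (z / (2 * D * L0)) * (γ1 * t / L0 ^ 2 + c * L0)))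
      ((Real.exp (σn * t) * deriv gn z
        - Real.exp (σn * t) * gn z * ((1 / (2 * D * L0)) * (γ1 * t / L0 ^ 2 + c * L0))) *
        Real.exp (f0 * t
          - (1 / (4 * D)) * (γ1 ^ 2 * t ^ 3 / (3 * L0 ^ 6)
              + c * γ1 * t ^ 2 / L0 ^ 3 + c ^ 2 * t)
          - (z / (2 * D * L0)) * (γ1 * t / L0 ^ 2 + c * L0))) z := by
    intro z
    have h1 : HasDerivAt (fun z => Real.exp (σn * t) * gn z)
        (Real.exp (σn * t) * deriv gn z) z := ((hdg z).hasDerivAt).const_mul _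
    have he : HasDerivAt (fun z : ℝ => f0 * t
        - (1 / (4 * D)) * (γ1 ^ 2 * t ^ 3 / (3 * L0 ^ 6)
            + c * γ1 * t ^ 2 / L0 ^ 3 + c ^ 2 * t)
        - (z / (2 * D * L0)) * (γ1 * t / L0 ^ 2 + c * L0))
        (-((1 / (2 * D * L0)) * (γ1 * t / L0 ^ 2 + c * L0))) z := by
      have h2 : HasDerivAt (fun z : ℝ => (z / (2 * D * L0)) * (γ1 * t / L0 ^ 2 + c * L0))
          ((1 / (2 * D * L0)) * (γ1 * t / L0 ^ 2 + c * L0)) z := by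
        have := ((hasDerivAt_id' z).div_const (2 * D * L0)).mul_const (γ1 * t / L0 ^ 2 + c * L0)
        convert this using 1 <;> ring
      simpa using h2.const_sub (f0 * t
          - (1 / (4 * D)) * (γ1 ^ 2 * t ^ 3 / (3 * L0 ^ 6)
              + c * γ1 * t ^ 2 / L0 ^ 3 + c ^ 2 * t))
    have := h1.mul he.exp
    refine this.congr_deriv ?_; ring
  -- the first derivative as a function
  have hd1 : deriv (fun z => Real.exp (σn * t) * gn z *
      Real.exp (f0 * t
        - (1 / (4 * D)) * (γ1 ^ 2 * t ^ 3 / (3 * L0 ^ 6)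
            + c * γ1 * t ^ 2 / L0 ^ 3 + c ^ 2 * t)
        - (z / (2 * D * L0)) * (γ1 * t / L0 ^ 2 + c * L0)))
      = fun z => (Real.exp (σn * t) * deriv gn z
        - Real.exp (σn * t) * gn z * ((1 / (2 * D * L0)) * (γ1 * t / L0 ^ 2 + c * L0))) *
        Real.exp (f0 * t
          - (1 / (4 * D)) * (γ1 ^ 2 * t ^ 3 / (3 * L0 ^ 6)
              + c * γ1 * t ^ 2 / L0 ^ 3 + c ^ 2 * t)
          - (z / (2 * D * L0)) * (γ1 * t / L0 ^ 2 + c * L0)) :=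
    funext fun z => (hsd z).deriv
  -- second spatial derivative at ξ
  have hsd2 : HasDerivAt (fun z => (Real.exp (σn * t) * deriv gn z
        - Real.exp (σn * t) * gn z * ((1 / (2 * D * L0)) * (γ1 * t / L0 ^ 2 + c * L0))) *
        Real.exp (f0 * t
          - (1 / (4 * D)) * (γ1 ^ 2 * t ^ 3 / (3 * L0 ^ 6)
              + c * γ1 * t ^ 2 / L0 ^ 3 + c ^ 2 * t)
          - (z / (2 * D * L0)) * (γ1 * t / L0 ^ 2 + c * L0)))
      (((Real.exp (σn * t) * deriv (deriv gn) ξ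
          - Real.exp (σn * t) * deriv gn ξ * ((1 / (2 * D * L0)) * (γ1 * t / L0 ^ 2 + c * L0)))
        - (Real.exp (σn * t) * deriv gn ξ
          - Real.exp (σn * t) * gn ξ * ((1 / (2 * D * L0)) * (γ1 * t / L0 ^ 2 + c * L0)))
            * ((1 / (2 * D * L0)) * (γ1 * t / L0 ^ 2 + c * L0))) *
        Real.exp (f0 * t
          - (1 / (4 * D)) * (γ1 ^ 2 * t ^ 3 / (3 * L0 ^ 6)
              + c * γ1 * t ^ 2 / L0 ^ 3 + c ^ 2 * t)
          - (ξ / (2 * D * L0)) * (γ1 * t / L0 ^ 2 + c * L0))) ξ := by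
    have h1 : HasDerivAt (fun z => Real.exp (σn * t) * deriv gn z
        - Real.exp (σn * t) * gn z * ((1 / (2 * D * L0)) * (γ1 * t / L0 ^ 2 + c * L0)))
        (Real.exp (σn * t) * deriv (deriv gn) ξ
          - Real.exp (σn * t) * deriv gn ξ * ((1 / (2 * D * L0)) * (γ1 * t / L0 ^ 2 + c * L0))) ξ := by
      exact (((hdg' ξ).hasDerivAt).const_mul _).sub
        ((((hdg ξ).hasDerivAt).const_mul (Real.exp (σn * t))).mul_const _)
    have he : HasDerivAt (fun z : ℝ => f0 * t
        - (1 / (4 * D)) * (γ1 ^ 2 * t ^ 3 / (3 * L0 ^ 6)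
            + c * γ1 * t ^ 2 / L0 ^ 3 + c ^ 2 * t)
        - (z / (2 * D * L0)) * (γ1 * t / L0 ^ 2 + c * L0))
        (-((1 / (2 * D * L0)) * (γ1 * t / L0 ^ 2 + c * L0))) ξ := by
      have h2 : HasDerivAt (fun z : ℝ => (z / (2 * D * L0)) * (γ1 * t / L0 ^ 2 + c * L0))
          ((1 / (2 * D * L0)) * (γ1 * t / L0 ^ 2 + c * L0)) ξ := by
        have := ((hasDerivAt_id' ξ).div_const (2 * D * L0)).mul_const (γ1 * t / L0 ^ 2 + c * L0)
        convert this using 1 <;> ring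
      simpa using h2.const_sub (f0 * t
          - (1 / (4 * D)) * (γ1 ^ 2 * t ^ 3 / (3 * L0 ^ 6)
              + c * γ1 * t ^ 2 / L0 ^ 3 + c ^ 2 * t))
    have := h1.mul he.exp
    refine this.congr_deriv ?_; ring
  rw [htd.deriv, hdA, hd1, hsd2.deriv]
  beta_reduce
  have hSL' : D * deriv (deriv gn) ξ = σn * gn ξ - (γ1 * ξ / (2 * D * L0 ^ 3)) * gn ξ := by
    have := hSL ξ ⟨le_of_lt hξ.1, le_of_lt hξ.2⟩
    linarith
  have hgdd : deriv (deriv gn) ξ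
      = (σn * gn ξ - (γ1 * ξ / (2 * D * L0 ^ 3)) * gn ξ) / D := by
    rw [eq_div_iff hDne]
    linarith [hSL']
  rw [hgdd]
  field_simp
  ring
end

section
/- Let ψ̂(x,t) be defined via û(ξ,t) = exp(−D π^2 t / (L0 (L0 + 2 c* t))) sin(π ξ / L0) (L0/(L0 + 2 c* t))^{1/2} exp((ξ c*/(2 D L0)) (L0 + 2 c* t)(1 − ξ/L0)) with ψ̂(x,t) = û(ξ,t) for ξ = (x + c* t + L0/2) L0/(L0 + 2 c* t). Then for fixed y > 0, ψ̂(−c* t − L0/2 + y, t) = Θ(t^{−3/2}) as t → ∞: that is, there exist positive constants β0 ≤ β1 and T such that β0 t^{−3/2} ≤ ψ̂(−c* t − L0/2 + y, t) ≤ β1 t^{−3/2} for all t ≥ T. -/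
open Real Set Filter
open Topology

/-- For the exact separable solution `ψ̂` on the interval `(−c*t − L0/2, c*t + L0/2)`,
at fixed distance `y > 0` from the left boundary, `ψ̂(−c*t − L0/2 + y, t) = Θ(t^{−3/2})`. -/
theorem stmt_16 (D f0 L0 : ℝ) (hD : 0 < D) (hf0 : 0 < f0) (hL0 : 0 < L0)
    (cs : ℝ) (hcs : cs = 2 * Real.sqrt (D * f0))
    (uhat : ℝ → ℝ → ℝ)
    (huhat : ∀ ξ t, uhat ξ t =
      Real.exp (-D * π ^ 2 * t / (L0 * (L0 + 2 * cs * t))) *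
        Real.sin (π * ξ / L0) * (L0 / (L0 + 2 * cs * t)) ^ ((1:ℝ)/2) *
        Real.exp ((ξ * cs / (2 * D * L0)) * (L0 + 2 * cs * t) * (1 - ξ / L0)))
    (ψhat : ℝ → ℝ → ℝ)
    (hψhat : ∀ x t, ψhat x t =
      uhat ((x + cs * t + L0 / 2) * L0 / (L0 + 2 * cs * t)) t)
    (y : ℝ) (hy : 0 < y) :
    ∃ β0 β1 T : ℝ, 0 < β0 ∧ β0 ≤ β1 ∧ 0 < T ∧
      ∀ t ≥ T, β0 * t ^ (-(3:ℝ)/2) ≤ ψhat (-cs * t - L0 / 2 + y) t ∧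
        ψhat (-cs * t - L0 / 2 + y) t ≤ β1 * t ^ (-(3:ℝ)/2) := by
  have hc : 0 < cs := by rw [hcs]; positivity
  -- M t = L0 + 2 cs t tends to ∞
  have hM_top : Tendsto (fun t : ℝ => L0 + 2 * cs * t) atTop atTop := by
    apply tendsto_atTop_add_const_left
    exact Tendsto.const_mul_atTop (by positivity) tendsto_id
  -- key: t / M t → 1/(2 cs)
  have hinv : Tendsto (fun t : ℝ => t / (L0 + 2 * cs * t)) atTop (𝓝 (1 / (2 * cs))) := by
    have h1 : Tendsto (fun t : ℝ => L0 / t + 2 * cs) atTop (𝓝 (0 + 2 * cs)) :=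
      (tendsto_const_nhds.div_atTop tendsto_id).add tendsto_const_nhds
    have h2 : Tendsto (fun t : ℝ => 1 / (L0 / t + 2 * cs)) atTop (𝓝 (1 / (0 + 2 * cs))) :=
      Tendsto.div (tendsto_const_nhds : Tendsto (fun _ : ℝ => (1:ℝ)) atTop (𝓝 1)) h1
        (by positivity)
    rw [zero_add] at h2
    refine h2.congr' ?_
    filter_upwards [eventually_gt_atTop 0] with t ht
    have hMt : (0:ℝ) < L0 + 2 * cs * t := by positivity
    rw [div_eq_div_iff (by positivity) hMt.ne']
    field_simp
  -- exponential factor 1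
  have hA : Tendsto (fun t : ℝ => Real.exp (-D * π ^ 2 * t / (L0 * (L0 + 2 * cs * t)))) atTop
      (𝓝 (Real.exp ((-D * π ^ 2 / L0) * (1 / (2 * cs))))) := by
    refine (Real.continuous_exp.tendsto _).comp ?_
    refine (tendsto_const_nhds.mul hinv).congr' ?_
    filter_upwards [eventually_gt_atTop 0] with t ht
    have hMt : (0:ℝ) < L0 + 2 * cs * t := by positivity
    field_simp
  -- exponential factor 2
  have hy0 : Tendsto (fun t : ℝ => y / (L0 + 2 * cs * t)) atTop (𝓝 0) :=
    tendsto_const_nhds.div_atTop hM_top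
  have hB : Tendsto (fun t : ℝ => Real.exp (cs * y / (2 * D) * (1 - y / (L0 + 2 * cs * t)))) atTop
      (𝓝 (Real.exp (cs * y / (2 * D) * (1 - 0)))) :=
    (Real.continuous_exp.tendsto _).comp (tendsto_const_nhds.mul (tendsto_const_nhds.sub hy0))
  -- sin factor
  have hs0 : Tendsto (fun t : ℝ => π * y / (L0 + 2 * cs * t)) atTop (𝓝 0) :=
    tendsto_const_nhds.div_atTop hM_top
  have hslope : Tendsto (fun x : ℝ => Real.sin x / x) (𝓝[≠] (0:ℝ)) (𝓝 1) := by
    have h := hasDerivAt_iff_tendsto_slope.mp (Real.hasDerivAt_sin 0)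
    rw [Real.cos_zero] at h
    refine h.congr fun x => ?_
    simp [slope_def_field]
  have hsin1 : Tendsto
      (fun t : ℝ => Real.sin (π * y / (L0 + 2 * cs * t)) / (π * y / (L0 + 2 * cs * t)))
      atTop (𝓝 1) := by
    refine hslope.comp (tendsto_nhdsWithin_iff.mpr ⟨hs0, ?_⟩)
    filter_upwards [eventually_gt_atTop 0] with t ht
    have hMt : (0:ℝ) < L0 + 2 * cs * t := by positivity
    have : (0:ℝ) < π * y / (L0 + 2 * cs * t) := by positivity
    simpa using this.ne'
  -- s * t factor
  have hst : Tendsto (fun t : ℝ => π * y * (t / (L0 + 2 * cs * t))) atTop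
      (𝓝 (π * y * (1 / (2 * cs)))) := tendsto_const_nhds.mul hinv
  -- sqrt factor
  have hroot : Tendsto (fun t : ℝ => (L0 * (t / (L0 + 2 * cs * t))) ^ ((1:ℝ)/2)) atTop
      (𝓝 ((L0 * (1 / (2 * cs))) ^ ((1:ℝ)/2))) :=
    (tendsto_const_nhds.mul hinv).rpow_const (Or.inr (by norm_num))
  -- the full product
  set ℓ : ℝ := Real.exp ((-D * π ^ 2 / L0) * (1 / (2 * cs))) *
      Real.exp (cs * y / (2 * D) * (1 - 0)) * 1 * (π * y * (1 / (2 * cs))) *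
      (L0 * (1 / (2 * cs))) ^ ((1:ℝ)/2) with hℓdef
  have hℓ : 0 < ℓ := by rw [hℓdef]; positivity
  have hP : Tendsto (fun t : ℝ =>
      Real.exp (-D * π ^ 2 * t / (L0 * (L0 + 2 * cs * t))) *
      Real.exp (cs * y / (2 * D) * (1 - y / (L0 + 2 * cs * t))) *
      (Real.sin (π * y / (L0 + 2 * cs * t)) / (π * y / (L0 + 2 * cs * t))) *
      (π * y * (t / (L0 + 2 * cs * t))) *
      (L0 * (t / (L0 + 2 * cs * t))) ^ ((1:ℝ)/2)) atTop (𝓝 ℓ) :=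
    ((((hA.mul hB).mul hsin1).mul hst).mul hroot)
  -- the scaled ψhat equals the product eventually
  have hG : Tendsto (fun t : ℝ => ψhat (-cs * t - L0 / 2 + y) t * t ^ ((3:ℝ)/2)) atTop (𝓝 ℓ) := by
    refine hP.congr' ?_
    filter_upwards [eventually_ge_atTop 1] with t ht
    have ht0 : (0:ℝ) < t := lt_of_lt_of_le one_pos ht
    have hMt : (0:ℝ) < L0 + 2 * cs * t := by positivity
    have hspos : (0:ℝ) < π * y / (L0 + 2 * cs * t) := by positivity
    rw [hψhat, huhat]
    have hξ : (-cs * t - L0 / 2 + y + cs * t + L0 / 2) * L0 / (L0 + 2 * cs * t) =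
        y * L0 / (L0 + 2 * cs * t) := by ring
    rw [hξ]
    have h1 : π * (y * L0 / (L0 + 2 * cs * t)) / L0 = π * y / (L0 + 2 * cs * t) := by
      field_simp
    have h2 : (y * L0 / (L0 + 2 * cs * t)) * cs / (2 * D * L0) * (L0 + 2 * cs * t) *
        (1 - (y * L0 / (L0 + 2 * cs * t)) / L0) =
        cs * y / (2 * D) * (1 - y / (L0 + 2 * cs * t)) := by
      field_simp
    rw [h1, h2]
    have h3 : (L0 * (t / (L0 + 2 * cs * t))) ^ ((1:ℝ)/2) =
        (L0 / (L0 + 2 * cs * t)) ^ ((1:ℝ)/2) * t ^ ((1:ℝ)/2) := by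
      rw [show L0 * (t / (L0 + 2 * cs * t)) = (L0 / (L0 + 2 * cs * t)) * t by ring,
        Real.mul_rpow (by positivity) ht0.le]
    have h4 : t ^ ((3:ℝ)/2) = t * t ^ ((1:ℝ)/2) := by
      rw [show (3:ℝ)/2 = 1 + 1/2 by norm_num, Real.rpow_add ht0, Real.rpow_one]
    rw [h3, h4]
    field_simp
  -- conclude
  have hIcc : Set.Icc (ℓ/2) (2*ℓ) ∈ 𝓝 ℓ := Icc_mem_nhds (by linarith) (by linarith)
  obtain ⟨T, hT⟩ := (Filter.eventually_atTop).mp ((hG.eventually hIcc).and (eventually_ge_atTop 1))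
  refine ⟨ℓ/2, 2*ℓ, max T 1, by positivity, by linarith, lt_of_lt_of_le one_pos (le_max_right _ _), ?_⟩
  intro t ht
  obtain ⟨hmem, ht1⟩ := hT t (le_trans (le_max_left _ _) ht)
  have ht0 : (0:ℝ) < t := lt_of_lt_of_le one_pos ht1
  have hX : (0:ℝ) < t ^ ((3:ℝ)/2) := Real.rpow_pos_of_pos ht0 _
  have hexp : t ^ (-(3:ℝ)/2) = (t ^ ((3:ℝ)/2))⁻¹ := by
    rw [show -(3:ℝ)/2 = -((3:ℝ)/2) by ring, Real.rpow_neg ht0.le]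
  constructor
  · rw [hexp, ← div_eq_mul_inv, div_le_iff₀ hX]
    exact hmem.1
  · rw [hexp, ← div_eq_mul_inv, le_div_iff₀ hX]
    exact hmem.2
end

section
/- With ψ̂ as above and y(t) = (3D/c*) log(t+1), one has ψ̂(−c* t − L0/2 + y(t), t) → ∞ as t → ∞, and in fact ψ̂(−c* t − L0/2 + y(t), t) = Θ(log t). -/
open Real Set Filter
set_option maxHeartbeats 1000000

lemma aux_bounds (D L0 cs t S L Y A0 m M β0 K1 : ℝ)
    (hD : 0 < D) (hL0 : 0 < L0) (hcs : 0 < cs) (ht2 : 2 ≤ t)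
    (hct : L0 ≤ cs * t)
    (hS : S = L0 + 2*cs*t) (hL : L = Real.log (t+1)) (hY : Y = 3*D/cs*L)
    (hA0 : A0 = Real.exp (-(D*π^2)/(2*cs*L0)))
    (hm : m = Real.sqrt (L0/(27*cs^3))) (hM : M = Real.sqrt (L0/cs^3))
    (hb0 : β0 = 9/8*π*D*A0*m/cs) (hK1 : K1 = 3*π*D*M/cs)
    (hc1 : π*Y/S ≤ 1) (hc2 : 3/2*L*(Y/S) ≤ Real.log 2) :
    β0 * Real.log t ≤
      Real.exp (-D*π^2*t/(L0*S)) * Real.sin (π*Y/S) * Real.sqrt (L0/S) *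
        Real.exp (3/2*L*(1 - Y/S)) ∧
    Real.exp (-D*π^2*t/(L0*S)) * Real.sin (π*Y/S) * Real.sqrt (L0/S) *
        Real.exp (3/2*L*(1 - Y/S)) ≤ 2*K1 * Real.log t := by
  have hcst : cs*2 ≤ cs*t := mul_le_mul_of_nonneg_left ht2 hcs.le
  have hSpos : 0 < S := by rw [hS]; linarith
  have hLpos : 0 < L := by rw [hL]; exact Real.log_pos (by linarith)
  have hYpos : 0 < Y := by rw [hY]; positivity
  have hupos : 0 < π*Y/S := by positivity
  have ht1 : (1:ℝ) < t := by linarith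
  have hlogt : 0 < Real.log t := Real.log_pos ht1
  have hA0pos : 0 < A0 := by rw [hA0]; positivity
  have hmpos : 0 < m := by rw [hm]; positivity
  have hMpos : 0 < M := by rw [hM]; positivity
  have hb0pos : 0 < β0 := by rw [hb0]; positivity
  have hK1pos : 0 < K1 := by rw [hK1]; positivity
  have hLlog : Real.log t ≤ L := by
    rw [hL]; exact Real.log_le_log (by linarith) (by linarith)
  have hL2 : L ≤ 2*Real.log t := by
    rw [hL]
    have h := Real.log_le_log (by positivity : (0:ℝ) < t+1) (show t+1 ≤ t^2 by nlinarith)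
    rw [Real.log_pow] at h
    push_cast at h
    linarith
  set Q := Real.sqrt (L0/S) * Real.exp (3/2*L) / S with hQ
  have hQpos : 0 < Q := by rw [hQ]; positivity
  have hexp2 : Real.exp (3/2*L) * Real.exp (3/2*L) = (t+1)^3 := by
    rw [← Real.exp_add, show (3:ℝ)/2*L + 3/2*L = L+L+L by ring,
      Real.exp_add, Real.exp_add, hL, Real.exp_log (by linarith : (0:ℝ) < t+1)]
    ring
  have hQsq : Q^2 = L0*(t+1)^3/S^3 := by
    rw [hQ, div_pow, mul_pow, Real.sq_sqrt (by positivity : (0:ℝ) ≤ L0/S), pow_two, hexp2]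
    field_simp
  have hcsS : cs*(t+1) ≤ S := by
    have e : cs*(t+1) = cs*t + cs := by ring
    rw [hS, e]; linarith
  have hS3 : S ≤ 3*cs*(t+1) := by
    have e : 3*cs*(t+1) = 3*(cs*t) + 3*cs := by ring
    rw [hS, e]; linarith
  have hQM : Q ≤ M := by
    rw [hM, ← Real.sqrt_sq hQpos.le]
    apply Real.sqrt_le_sqrt
    rw [hQsq, div_le_div_iff₀ (by positivity) (by positivity)]
    have h3 : (cs*(t+1))^3 ≤ S^3 := pow_le_pow_left₀ (by positivity) hcsS 3
    have h4 := mul_le_mul_of_nonneg_left h3 hL0.le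
    have h5 : L0*(cs*(t+1))^3 = L0*(t+1)^3*cs^3 := by ring
    linarith
  have hmQ : m ≤ Q := by
    rw [hm, ← Real.sqrt_sq hQpos.le]
    apply Real.sqrt_le_sqrt
    rw [hQsq, div_le_div_iff₀ (by positivity) (by positivity)]
    have h3 : S^3 ≤ (3*cs*(t+1))^3 := pow_le_pow_left₀ hSpos.le hS3 3
    have h4 := mul_le_mul_of_nonneg_left h3 hL0.le
    have h5 : L0*(3*cs*(t+1))^3 = 27*(L0*(t+1)^3)*cs^3 := by ring
    linarith
  have hsinu_le : Real.sin (π*Y/S) ≤ π*Y/S := (Real.sin_lt hupos).le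
  have hcube : (π*Y/S)^3 ≤ π*Y/S := by
    nlinarith [mul_nonneg (mul_nonneg hupos.le hupos.le) (sub_nonneg.mpr hc1), hupos]
  have hsinu_ge : 3/4*(π*Y/S) ≤ Real.sin (π*Y/S) := by
    have h := Real.sin_gt_sub_cube hupos
    linarith
  have hsin_nonneg : 0 ≤ Real.sin (π*Y/S) :=
    Real.sin_nonneg_of_nonneg_of_le_pi hupos.le (le_trans hc1 (by linarith [Real.pi_gt_three]))
  have hA_le : Real.exp (-D*π^2*t/(L0*S)) ≤ 1 := by
    rw [Real.exp_le_one_iff]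
    have h : 0 ≤ D*π^2*t/(L0*S) := by positivity
    rw [show -D*π^2*t/(L0*S) = -(D*π^2*t/(L0*S)) by ring]
    linarith
  have hA_ge : A0 ≤ Real.exp (-D*π^2*t/(L0*S)) := by
    rw [hA0, Real.exp_le_exp]
    have hpos : 0 < D*π^2*L0^2 := by positivity
    have h1 : D*π^2*t/(L0*S) ≤ D*π^2/(2*cs*L0) := by
      rw [div_le_div_iff₀ (by positivity) (by positivity), hS]
      have e : D*π^2*(L0*(L0+2*cs*t)) = D*π^2*t*(2*cs*L0) + D*π^2*L0^2 := by ring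
      rw [e]; linarith
    rw [show -D*π^2*t/(L0*S) = -(D*π^2*t/(L0*S)) by ring,
       show -(D*π^2)/(2*cs*L0) = -(D*π^2/(2*cs*L0)) by ring]
    exact neg_le_neg h1
  have hys : 0 ≤ Y/S := by positivity
  have hE_le : Real.exp (3/2*L*(1 - Y/S)) ≤ Real.exp (3/2*L) := by
    rw [Real.exp_le_exp]
    have h := mul_nonneg (mul_nonneg (by norm_num : (0:ℝ) ≤ 3/2) hLpos.le) hys
    nlinarith [h]
  have hE_ge : 1/2*Real.exp (3/2*L) ≤ Real.exp (3/2*L*(1 - Y/S)) := by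
    have hsplit : Real.exp (3/2*L*(1 - Y/S)) = Real.exp (3/2*L) * Real.exp (-(3/2*L*(Y/S))) := by
      rw [← Real.exp_add]; ring_nf
    rw [hsplit]
    have h2 : Real.exp (-Real.log 2) ≤ Real.exp (-(3/2*L*(Y/S))) :=
      Real.exp_le_exp.mpr (neg_le_neg hc2)
    rw [Real.exp_neg, Real.exp_log two_pos] at h2
    have h3 := mul_le_mul_of_nonneg_left h2 (Real.exp_pos (3/2*L)).le
    have e : Real.exp (3/2*L) * (2:ℝ)⁻¹ = 1/2*Real.exp (3/2*L) := by ring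
    linarith [h3, e ▸ h3]
  constructor
  · calc β0 * Real.log t ≤ β0 * L := by gcongr
      _ = 3/8*A0*π*Y*m := by rw [hb0, hY]; field_simp; ring
      _ ≤ 3/8*A0*π*Y*Q := by gcongr
      _ = A0 * (3/4*(π*Y/S)) * Real.sqrt (L0/S) * (1/2*Real.exp (3/2*L)) := by
          rw [hQ]; ring
      _ ≤ Real.exp (-D*π^2*t/(L0*S)) * Real.sin (π*Y/S) * Real.sqrt (L0/S) *
            Real.exp (3/2*L*(1 - Y/S)) := by
          have s1 : A0 * (3/4*(π*Y/S)) ≤ Real.exp (-D*π^2*t/(L0*S)) * Real.sin (π*Y/S) :=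
            mul_le_mul hA_ge hsinu_ge (by positivity) (Real.exp_pos _).le
          have s2 := mul_le_mul_of_nonneg_right s1 (Real.sqrt_nonneg (L0/S))
          exact mul_le_mul s2 hE_ge (by positivity)
            (mul_nonneg (mul_nonneg (Real.exp_pos _).le hsin_nonneg) (Real.sqrt_nonneg _))
  · calc Real.exp (-D*π^2*t/(L0*S)) * Real.sin (π*Y/S) * Real.sqrt (L0/S) *
            Real.exp (3/2*L*(1 - Y/S))
        ≤ 1 * (π*Y/S) * Real.sqrt (L0/S) * Real.exp (3/2*L) := by
          have s1 : Real.exp (-D*π^2*t/(L0*S)) * Real.sin (π*Y/S) ≤ 1 * (π*Y/S) :=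
            mul_le_mul hA_le hsinu_le hsin_nonneg one_pos.le
          have s2 := mul_le_mul_of_nonneg_right s1 (Real.sqrt_nonneg (L0/S))
          exact mul_le_mul s2 hE_le (Real.exp_pos _).le
            (by positivity)
      _ = π*Y*Q := by rw [hQ]; ring
      _ ≤ π*Y*M := by gcongr
      _ = K1*L := by rw [hK1, hY]; field_simp
      _ ≤ K1*(2*Real.log t) := by gcongr
      _ = 2*K1*Real.log t := by ring

/-- With `y(t) = (3D/c*) log(t+1)`, the exact solution `ψ̂` evaluated at
`x = −c*t − L0/2 + y(t)` tends to `∞`, and is in fact `Θ(log t)`, as `t → ∞`. -/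
theorem stmt_17 (D f0 L0 : ℝ) (hD : 0 < D) (hf0 : 0 < f0) (hL0 : 0 < L0)
    (cs : ℝ) (hcs : cs = 2 * Real.sqrt (D * f0))
    (uhat : ℝ → ℝ → ℝ)
    (huhat : ∀ ξ t, uhat ξ t =
      Real.exp (-D * π ^ 2 * t / (L0 * (L0 + 2 * cs * t))) *
        Real.sin (π * ξ / L0) * (L0 / (L0 + 2 * cs * t)) ^ ((1:ℝ)/2) *
        Real.exp ((ξ * cs / (2 * D * L0)) * (L0 + 2 * cs * t) * (1 - ξ / L0)))
    (ψhat : ℝ → ℝ → ℝ)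
    (hψhat : ∀ x t, ψhat x t =
      uhat ((x + cs * t + L0 / 2) * L0 / (L0 + 2 * cs * t)) t)
    (y : ℝ → ℝ) (hy : ∀ t, y t = (3 * D / cs) * Real.log (t + 1)) :
    Tendsto (fun t => ψhat (-cs * t - L0 / 2 + y t) t) atTop atTop ∧
    ∃ β0 β1 T : ℝ, 0 < β0 ∧ β0 ≤ β1 ∧ 1 < T ∧
      ∀ t ≥ T, β0 * Real.log t ≤ ψhat (-cs * t - L0 / 2 + y t) t ∧
        ψhat (-cs * t - L0 / 2 + y t) t ≤ β1 * Real.log t := by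
  have hcs0 : 0 < cs := by rw [hcs]; positivity
  -- the constants
  set b0 : ℝ := 9/8*π*D*Real.exp (-(D*π^2)/(2*cs*L0))*Real.sqrt (L0/(27*cs^3))/cs with hb0def
  set K1 : ℝ := 3*π*D*Real.sqrt (L0/cs^3)/cs with hK1def
  have hb0pos : 0 < b0 := by rw [hb0def]; positivity
  have hK1pos : 0 < K1 := by rw [hK1def]; positivity
  -- simplified value of ψhat along the ray
  have hval : ∀ t : ℝ, 0 < L0 + 2*cs*t → ψhat (-cs * t - L0 / 2 + y t) t =
      Real.exp (-D*π^2*t/(L0*(L0 + 2*cs*t))) *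
        Real.sin (π*(3*D/cs*Real.log (t+1))/(L0 + 2*cs*t)) *
        Real.sqrt (L0/(L0 + 2*cs*t)) *
        Real.exp (3/2*(Real.log (t+1))*(1 - (3*D/cs*Real.log (t+1))/(L0 + 2*cs*t))) := by
    intro t hSpos
    rw [hψhat, huhat, hy]
    have h1 : π * ((-cs * t - L0 / 2 + 3 * D / cs * Real.log (t + 1) + cs * t + L0 / 2)
          * L0 / (L0 + 2 * cs * t)) / L0
        = π*(3*D/cs*Real.log (t+1))/(L0 + 2*cs*t) := by
      field_simp; ring
    have h2 : ((-cs * t - L0 / 2 + 3 * D / cs * Real.log (t + 1) + cs * t + L0 / 2)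
            * L0 / (L0 + 2 * cs * t)) * cs / (2 * D * L0) * (L0 + 2 * cs * t) *
          (1 - (-cs * t - L0 / 2 + 3 * D / cs * Real.log (t + 1) + cs * t + L0 / 2)
            * L0 / (L0 + 2 * cs * t) / L0)
        = 3/2*(Real.log (t+1))*(1 - (3*D/cs*Real.log (t+1))/(L0 + 2*cs*t)) := by
      have hne : L0 + 2*cs*t ≠ 0 := hSpos.ne'
      have hD' : D ≠ 0 := hD.ne'
      have hcs' : cs ≠ 0 := hcs0.ne'
      have hL0' : L0 ≠ 0 := hL0.ne'
      have hx : -cs * t - L0 / 2 + 3 * D / cs * Real.log (t + 1) + cs * t + L0 / 2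
          = 3 * D / cs * Real.log (t + 1) := by ring
      have e1 : 3 * D / cs * Real.log (t + 1) * L0 / (L0 + 2 * cs * t) / L0
          = 3 * D / cs * Real.log (t + 1) / (L0 + 2 * cs * t) := by field_simp
      have e2 : 3 * D / cs * Real.log (t + 1) * L0 / (L0 + 2 * cs * t) * cs / (2 * D * L0)
          * (L0 + 2 * cs * t) = 3/2 * Real.log (t + 1) := by
        generalize L0 + 2 * cs * t = S at hne ⊢
        field_simp
      rw [hx, e1, e2]
    rw [h1, h2, ← Real.sqrt_eq_rpow]
  -- eventual smallness conditions
  have hten1 := (Real.tendsto_pow_log_div_mul_add_atTop (2*cs) (L0-2*cs) 1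
      (by positivity : (0:ℝ) < 2*cs).ne').comp
      (tendsto_atTop_add_const_right atTop (1:ℝ) tendsto_id)
  have hten2 := (Real.tendsto_pow_log_div_mul_add_atTop (2*cs) (L0-2*cs) 2
      (by positivity : (0:ℝ) < 2*cs).ne').comp
      (tendsto_atTop_add_const_right atTop (1:ℝ) tendsto_id)
  have hev1 : ∀ᶠ t : ℝ in atTop,
      3*π*D/cs * (Real.log (t+1)^1/(2*cs*(t+1)+(L0-2*cs))) < 1 := by
    have h := Tendsto.eventually_lt_const one_pos
      (by simpa using hten1.const_mul (3*π*D/cs))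
    filter_upwards [h] with t ht
    simpa [Function.comp] using ht
  have hev2 : ∀ᶠ t : ℝ in atTop,
      9*D/(2*cs) * (Real.log (t+1)^2/(2*cs*(t+1)+(L0-2*cs))) < Real.log 2 := by
    have h := Tendsto.eventually_lt_const (Real.log_pos (by norm_num : (1:ℝ) < 2))
      (by simpa using hten2.const_mul (9*D/(2*cs)))
    filter_upwards [h] with t ht
    simpa [Function.comp] using ht
  obtain ⟨T0, hT0⟩ := eventually_atTop.mp
    (((eventually_ge_atTop (2:ℝ)).and (eventually_ge_atTop (L0/cs))).and (hev1.and hev2))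
  -- the main pointwise bounds
  have key : ∀ t ≥ max T0 2, b0 * Real.log t ≤ ψhat (-cs * t - L0 / 2 + y t) t ∧
      ψhat (-cs * t - L0 / 2 + y t) t ≤ 2*K1 * Real.log t := by
    intro t ht
    obtain ⟨⟨ht2, htc⟩, hc1', hc2'⟩ := hT0 t (le_trans (le_max_left _ _) ht)
    have ht2' : (2:ℝ) ≤ t := ht2
    have hct : L0 ≤ cs * t := by
      rw [div_le_iff₀ hcs0] at htc; linarith
    have hcst : cs*2 ≤ cs*t := mul_le_mul_of_nonneg_left ht2' hcs0.le
    have hSpos : 0 < L0 + 2*cs*t := by linarith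
    have hc1 : π*(3*D/cs*Real.log (t+1))/(L0 + 2*cs*t) ≤ 1 := by
      have e : π*(3*D/cs*Real.log (t+1))/(L0 + 2*cs*t)
          = 3*π*D/cs * (Real.log (t+1)^1/(2*cs*(t+1)+(L0-2*cs))) := by
        rw [pow_one]; ring
      rw [e]; exact hc1'.le
    have hc2 : 3/2*(Real.log (t+1))*((3*D/cs*Real.log (t+1))/(L0 + 2*cs*t)) ≤ Real.log 2 := by
      have e : 3/2*(Real.log (t+1))*((3*D/cs*Real.log (t+1))/(L0 + 2*cs*t))
          = 9*D/(2*cs) * (Real.log (t+1)^2/(2*cs*(t+1)+(L0-2*cs))) := by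
        rw [pow_two]; ring
      rw [e]; exact hc2'.le
    have h := aux_bounds D L0 cs t (L0 + 2*cs*t) (Real.log (t+1))
      (3*D/cs*Real.log (t+1)) (Real.exp (-(D*π^2)/(2*cs*L0)))
      (Real.sqrt (L0/(27*cs^3))) (Real.sqrt (L0/cs^3)) b0 K1
      hD hL0 hcs0 ht2' hct rfl rfl rfl rfl rfl rfl hb0def hK1def hc1 hc2
    rw [← hval t hSpos] at h
    exact h
  have hT1 : (1:ℝ) < max T0 2 := lt_of_lt_of_le one_lt_two (le_max_right _ _)
  constructor
  · refine tendsto_atTop_mono' atTop ?_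
      (Real.tendsto_log_atTop.const_mul_atTop hb0pos)
    exact eventually_atTop.mpr ⟨max T0 2, fun t ht => (key t ht).1⟩
  · refine ⟨b0, max (2*K1) b0, max T0 2, hb0pos, le_max_right _ _, hT1, fun t ht => ?_⟩
    have hlog : 0 ≤ Real.log t := by
      have ht2 : (2:ℝ) ≤ t := le_trans (le_max_right _ _) ht
      exact (Real.log_pos (by linarith)).le
    exact ⟨(key t ht).1, le_trans (key t ht).2
      (mul_le_mul_of_nonneg_right (le_max_left _ _) hlog)⟩
end
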